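/- If p, q are coprime polynomials of degree d (d odd) such that the rational map t ↦ p(t)/q(t) commutes with the antipodal map z ↦ -1/z̄ on ℂP¹, then p = -λ·τ(q) for some λ ∈ ℂ with |λ| = 1, where τ(q)(t) = (-t)^d · conj(q(-1/t̄)); after rescaling p, q one may assume p = -τ(q). -/

import Mathlib

open Polynomial

/-- The "quaternionic structure" map on polynomials of degree ≤ k:
`tau k f = (-t)^k ⬝ conj (f (-1/t̄))`, i.e. `(tau k f).coeff i = (-1)^(k-i) conj (f.coeff (k-i))`. -/
noncomputable def tau (k : ℕ) (f : Polynomial ℂ) : Polynomial ℂ :=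
  ∑ i ∈ Finset.range (k + 1), C ((-1 : ℂ) ^ (k - i) * (starRingEnd ℂ) (f.coeff (k - i))) * X ^ i

lemma tau_coeff (k : ℕ) (f : Polynomial ℂ) (n : ℕ) :
    (tau k f).coeff n =
      if n ≤ k then (-1 : ℂ) ^ (k - n) * (starRingEnd ℂ) (f.coeff (k - n)) else 0 := by
  unfold tau
  rw [Polynomial.finset_sum_coeff]
  simp only [Polynomial.coeff_C_mul, Polynomial.coeff_X_pow, mul_ite, mul_one, mul_zero]
  rw [Finset.sum_ite_eq (Finset.range (k + 1)) n]
  simp [Nat.lt_succ_iff]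

lemma tau_natDegree_le (k : ℕ) (f : Polynomial ℂ) : (tau k f).natDegree ≤ k := by
  apply Polynomial.natDegree_le_iff_coeff_eq_zero.mpr
  intro n hn
  rw [tau_coeff]
  simp [Nat.not_le.mpr hn]

lemma tau_C_mul (k : ℕ) (a : ℂ) (f : Polynomial ℂ) :
    tau k (C a * f) = C ((starRingEnd ℂ) a) * tau k f := by
  ext n
  rw [Polynomial.coeff_C_mul, tau_coeff, tau_coeff]
  split <;> simp [Polynomial.coeff_C_mul, map_mul] <;> ring

lemma tau_zero (k : ℕ) : tau k (0 : Polynomial ℂ) = 0 := by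
  ext n; rw [tau_coeff]; simp

lemma tau_tau (k : ℕ) (hk : Odd k) (f : Polynomial ℂ) (hf : f.natDegree ≤ k) :
    tau k (tau k f) = -f := by
  ext n
  rw [tau_coeff]
  by_cases hn : n ≤ k
  · rw [if_pos hn, tau_coeff, if_pos (Nat.sub_le k n), Nat.sub_sub_self hn]
    rw [map_mul, map_pow]
    simp only [map_neg, map_one, Complex.conj_conj]
    rw [← mul_assoc, ← pow_add]
    have : k - n + n = k := Nat.sub_add_cancel hn
    rw [this, hk.neg_one_pow]
    simp
  · rw [if_neg hn]
    rw [Polynomial.coeff_neg, Polynomial.coeff_eq_zero_of_natDegree_lt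
      (lt_of_le_of_lt hf (Nat.lt_of_not_le hn))]
    simp

/-- If `p, q` are coprime polynomials of degree `d` (`d` odd) such that the rational map
`t ↦ p(t)/q(t)` commutes with the antipodal map `z ↦ -1/z̄` (equivalently,
`tau d p ⬝ p + tau d q ⬝ q = 0`), then `p = -λ ⬝ tau d q` for some unimodular `λ`;
moreover after rescaling `p, q` by a suitable `μ ≠ 0` one has `p = -tau d q`. -/
theorem eq_neg_tau_of_commutes_with_antipodal (d : ℕ) (hd : Odd d) (p q : Polynomial ℂ)
    (hp : p.natDegree = d) (hq : q.natDegree = d) (hcop : IsCoprime p q)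
    (hcomm : tau d p * p + tau d q * q = 0) :
    (∃ lam : ℂ, ‖lam‖ = 1 ∧ p = -(C lam * tau d q)) ∧
      ∃ μ : ℂ, μ ≠ 0 ∧ C μ * p = -tau d (C μ * q) := by
  have hd1 : 1 ≤ d := hd.pos
  have hp0 : p ≠ 0 := by
    intro h; rw [h] at hp; simp at hp; omega
  have hq0 : q ≠ 0 := by
    intro h; rw [h] at hq; simp at hq; omega
  -- q divides tau d p
  have hdvd : q ∣ tau d p := by
    have h1 : q ∣ tau d p * p := by
      refine Dvd.intro (-(tau d q)) ?_
      linear_combination -hcomm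
    exact hcop.symm.dvd_of_dvd_mul_right h1
  obtain ⟨s, hs⟩ := hdvd
  have htp0 : tau d p ≠ 0 := by
    intro h
    have h2 := tau_tau d hd p (le_of_eq hp)
    rw [h, tau_zero] at h2
    exact hp0 (by linear_combination h2)
  have hs0 : s ≠ 0 := by
    intro h; rw [h, mul_zero] at hs; exact htp0 hs
  have hsdeg : s.natDegree = 0 := by
    have h1 : (tau d p).natDegree ≤ d := tau_natDegree_le d p
    rw [hs, Polynomial.natDegree_mul hq0 hs0, hq] at h1
    omega
  set c := s.coeff 0 with hc
  have hsC : s = C c := Polynomial.eq_C_of_natDegree_eq_zero hsdeg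
  have hc0 : c ≠ 0 := by
    intro h; rw [h, Polynomial.C_0] at hsC; exact hs0 hsC
  have htp : tau d p = C c * q := by rw [hs, hsC]; ring
  -- tau d q = -(C c * p)
  have htq : tau d q = -(C c * p) := by
    have h1 : q * (C c * p + tau d q) = 0 := by
      rw [htp] at hcomm; linear_combination hcomm
    have h2 := (mul_eq_zero.mp h1).resolve_left hq0
    linear_combination h2
  -- |c| = 1
  have hcc : (starRingEnd ℂ) c * c = 1 := by
    have h3 := tau_tau d hd q (le_of_eq hq)
    rw [htq] at h3
    rw [show -(C c * p) = C (-c) * p by simp] at h3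
    rw [tau_C_mul, htp] at h3
    simp only [map_neg] at h3
    have h4 : (C ((starRingEnd ℂ) c) * C c - 1) * q = 0 := by
      linear_combination -h3
    have h5 := (mul_eq_zero.mp h4).resolve_right hq0
    have h6 : C ((starRingEnd ℂ) c * c) = C 1 := by
      rw [Polynomial.C_mul, Polynomial.C_1]; linear_combination h5
    exact Polynomial.C_injective h6
  have habs : ‖c‖ = 1 := by
    have h1 : ((Complex.normSq c : ℝ) : ℂ) = 1 := by
      rw [← Complex.mul_conj]; linear_combination hcc
    have h2 : Complex.normSq c = 1 := by exact_mod_cast h1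
    rw [Complex.norm_def, h2, Real.sqrt_one]
  constructor
  · refine ⟨(starRingEnd ℂ) c, by simpa using habs, ?_⟩
    rw [htq]
    have hccC : C ((starRingEnd ℂ) c) * C c = 1 := by
      rw [← Polynomial.C_mul, hcc, Polynomial.C_1]
    linear_combination (-p) * hccC
  · obtain ⟨μ, hμ⟩ : ∃ μ : ℂ, μ ^ 2 = c := by
      exact IsAlgClosed.exists_pow_nat_eq c (by norm_num)
    have hμ0 : μ ≠ 0 := by
      intro h; rw [h] at hμ; simp at hμ; exact hc0 hμ.symm
    refine ⟨μ, hμ0, ?_⟩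
    rw [tau_C_mul, htq]
    have hconjμ : (starRingEnd ℂ) μ * c = μ := by
      have habsμ : (starRingEnd ℂ) μ * μ = 1 := by
        have h1 : ‖μ‖ ^ 2 = 1 := by
          have := congrArg (‖·‖) hμ
          rw [norm_pow] at this
          rw [this, habs]
        have : ((Complex.normSq μ : ℝ) : ℂ) = 1 := by
          rw [Complex.normSq_eq_norm_sq, h1]; norm_num
        rw [mul_comm, Complex.mul_conj]
        exact this
      calc (starRingEnd ℂ) μ * c = (starRingEnd ℂ) μ * μ * μ := by rw [← hμ]; ring
        _ = μ := by rw [habsμ, one_mul]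
    conv_lhs => rw [← hconjμ]
    rw [Polynomial.C_mul]
    ring
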